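/- Let q ≥ 2, p = q³ + q⁴. Fix unit vectors h, h̃ ∈ S^{q−1} and θ, θ̃ ∈ (−π/2, π/2], write cos ψ = ⟨h, h̃⟩, and let x = x(h,θ), x̃ = x(h̃,θ̃). Let L ⊂ ℝ^p be the subspace spanned by x, x_θ = (−sin θ · h^{⊗3}, cos θ · h^{⊗4}), and the vectors D(u) for u ∈ ℝ^q with ⟨u, h⟩ = 0, and let P be the orthogonal projection of ℝ^p onto L. Then ⟨x̃, P x̃⟩ = cos⁶ψ cos²θ̃ + cos⁸ψ sin²θ̃ + sin²ψ · (3 cos²ψ cos θ̃ cos θ + 4 cos³ψ sin θ̃ sin θ)² / (3 cos²θ + 4 sin²θ). -/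

import Mathlib

open scoped RealInnerProductSpace BigOperators
open MeasureTheory ProbabilityTheory Real Filter

noncomputable section

/-- The threefold Kronecker power `h^{⊗3} ∈ ℝ^{q³}`, with entries `h i * h j * h k`. -/
def kron3 {q : ℕ} (h : EuclideanSpace ℝ (Fin q)) :
    EuclideanSpace ℝ (Fin q × Fin q × Fin q) :=
  WithLp.toLp 2 (fun i => h i.1 * h i.2.1 * h i.2.2)

/-- The fourfold Kronecker power `h^{⊗4} ∈ ℝ^{q⁴}`, with entries `h i * h j * h k * h l`. -/
def kron4 {q : ℕ} (h : EuclideanSpace ℝ (Fin q)) :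
    EuclideanSpace ℝ (Fin q × Fin q × Fin q × Fin q) :=
  WithLp.toLp 2 (fun i => h i.1 * h i.2.1 * h i.2.2.1 * h i.2.2.2)

/-- `ℝ^p = ℝ^{q³} × ℝ^{q⁴}` with its standard Euclidean inner product, `p = q³ + q⁴`. -/
abbrev Rp (q : ℕ) :=
  EuclideanSpace ℝ ((Fin q × Fin q × Fin q) ⊕ (Fin q × Fin q × Fin q × Fin q))

/-- `x(h,θ) = (cos θ · h^{⊗3}, sin θ · h^{⊗4}) ∈ ℝ^p`. -/
def xMap {q : ℕ} (h : EuclideanSpace ℝ (Fin q)) (θ : ℝ) : Rp q :=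
  WithLp.toLp 2 (Sum.elim (fun i => Real.cos θ * kron3 h i) (fun i => Real.sin θ * kron4 h i))

/-- The tangent vector
`D(u) = (cos θ (u⊗h⊗h + h⊗u⊗h + h⊗h⊗u),
         sin θ (u⊗h⊗h⊗h + h⊗u⊗h⊗h + h⊗h⊗u⊗h + h⊗h⊗h⊗u)) ∈ ℝ^p`. -/
def Dvec {q : ℕ} (h u : EuclideanSpace ℝ (Fin q)) (θ : ℝ) : Rp q :=
  WithLp.toLp 2 (Sum.elim
    (fun i => Real.cos θ *
      (u i.1 * h i.2.1 * h i.2.2 + h i.1 * u i.2.1 * h i.2.2 + h i.1 * h i.2.1 * u i.2.2))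
    (fun i => Real.sin θ *
      (u i.1 * h i.2.1 * h i.2.2.1 * h i.2.2.2 + h i.1 * u i.2.1 * h i.2.2.1 * h i.2.2.2 +
        h i.1 * h i.2.1 * u i.2.2.1 * h i.2.2.2 + h i.1 * h i.2.1 * h i.2.2.1 * u i.2.2.2)))

/-- `x_θ = ∂x/∂θ = (−sin θ · h^{⊗3}, cos θ · h^{⊗4}) ∈ ℝ^p`. -/
def xTheta {q : ℕ} (h : EuclideanSpace ℝ (Fin q)) (θ : ℝ) : Rp q :=
  WithLp.toLp 2 (Sum.elim (fun i => -Real.sin θ * kron3 h i) (fun i => Real.cos θ * kron4 h i))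

/-- `L = span{x(h,θ), x_θ, D(u) (u ⊥ h)} = span{x} ⊕ T_x M ⊂ ℝ^p`. -/
def spanL {q : ℕ} (h : EuclideanSpace ℝ (Fin q)) (θ : ℝ) : Submodule ℝ (Rp q) :=
  Submodule.span ℝ
    ({xMap h θ, xTheta h θ} ∪
      {v | ∃ u : EuclideanSpace ℝ (Fin q), ⟪u, h⟫ = 0 ∧ v = Dvec h u θ})

section Aux
variable {q : ℕ}

def E3 (a b c : EuclideanSpace ℝ (Fin q)) :
    EuclideanSpace ℝ ((Fin q × Fin q × Fin q) ⊕ (Fin q × Fin q × Fin q × Fin q)) :=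
  WithLp.toLp 2 (Sum.elim (fun i => a i.1 * b i.2.1 * c i.2.2) (fun _ => 0))

def E4 (a b c d : EuclideanSpace ℝ (Fin q)) :
    EuclideanSpace ℝ ((Fin q × Fin q × Fin q) ⊕ (Fin q × Fin q × Fin q × Fin q)) :=
  WithLp.toLp 2 (Sum.elim (fun _ => 0) (fun i => a i.1 * b i.2.1 * c i.2.2.1 * d i.2.2.2))

lemma sum3_gen (f1 f2 f3 g1 g2 g3 : Fin q → ℝ) :
    ∑ i : Fin q × Fin q × Fin q, (f1 i.1 * f2 i.2.1 * f3 i.2.2) * (g1 i.1 * g2 i.2.1 * g3 i.2.2)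
      = (∑ i, f1 i * g1 i) * (∑ i, f2 i * g2 i) * (∑ i, f3 i * g3 i) := by
  simp only [Fintype.sum_prod_type]
  rw [mul_assoc, Finset.sum_mul_sum, Finset.sum_mul_sum]
  refine Finset.sum_congr rfl fun i _ => Finset.sum_congr rfl fun j _ => ?_
  rw [Finset.mul_sum]
  exact Finset.sum_congr rfl fun k _ => by ring

lemma sum4_gen (f1 f2 f3 f4 g1 g2 g3 g4 : Fin q → ℝ) :
    ∑ i : Fin q × Fin q × Fin q × Fin q,
        (f1 i.1 * f2 i.2.1 * f3 i.2.2.1 * f4 i.2.2.2) * (g1 i.1 * g2 i.2.1 * g3 i.2.2.1 * g4 i.2.2.2)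
      = (∑ i, f1 i * g1 i) * (∑ i, f2 i * g2 i) * (∑ i, f3 i * g3 i) * (∑ i, f4 i * g4 i) := by
  simp only [Fintype.sum_prod_type]
  rw [mul_assoc, mul_assoc, Finset.sum_mul_sum, Finset.sum_mul_sum, Finset.sum_mul_sum]
  refine Finset.sum_congr rfl fun i _ => Finset.sum_congr rfl fun j _ => ?_
  conv_rhs => simp only [Finset.mul_sum]
  exact Finset.sum_congr rfl fun k _ => Finset.sum_congr rfl fun l _ => by ring

lemma inner_E3_E3 (a b c a' b' c' : EuclideanSpace ℝ (Fin q)) :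
    ⟪E3 a b c, E3 a' b' c'⟫ = ⟪a, a'⟫ * ⟪b, b'⟫ * ⟪c, c'⟫ := by
  simp only [E3, PiLp.inner_apply, RCLike.inner_apply, conj_trivial]
  rw [Fintype.sum_sum_type]
  simp only [Sum.elim_inl, Sum.elim_inr, mul_zero, Finset.sum_const_zero, add_zero]
  exact sum3_gen a' b' c' a b c

lemma inner_E4_E4 (a b c d a' b' c' d' : EuclideanSpace ℝ (Fin q)) :
    ⟪E4 a b c d, E4 a' b' c' d'⟫ = ⟪a, a'⟫ * ⟪b, b'⟫ * ⟪c, c'⟫ * ⟪d, d'⟫ := by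
  simp only [E4, PiLp.inner_apply, RCLike.inner_apply, conj_trivial]
  rw [Fintype.sum_sum_type]
  simp only [Sum.elim_inl, Sum.elim_inr, zero_mul, Finset.sum_const_zero, zero_add]
  exact sum4_gen a' b' c' d' a b c d

lemma inner_E3_E4 (a b c a' b' c' d' : EuclideanSpace ℝ (Fin q)) :
    ⟪E3 a b c, E4 a' b' c' d'⟫ = 0 := by
  simp only [E3, E4, PiLp.inner_apply, RCLike.inner_apply, conj_trivial]
  rw [Fintype.sum_sum_type]
  simp

lemma inner_E4_E3 (a b c d a' b' c' : EuclideanSpace ℝ (Fin q)) :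
    ⟪E4 a b c d, E3 a' b' c'⟫ = 0 := by
  simp only [E3, E4, PiLp.inner_apply, RCLike.inner_apply, conj_trivial]
  rw [Fintype.sum_sum_type]
  simp


lemma xMap_eq (h : EuclideanSpace ℝ (Fin q)) (θ : ℝ) :
    xMap h θ = Real.cos θ • E3 h h h + Real.sin θ • E4 h h h h := by
  ext i
  cases i with
  | inl j => simp [xMap, E3, E4, kron3, PiLp.add_apply, PiLp.smul_apply, smul_eq_mul]
  | inr j => simp [xMap, E3, E4, kron4, PiLp.add_apply, PiLp.smul_apply, smul_eq_mul]

lemma xTheta_eq (h : EuclideanSpace ℝ (Fin q)) (θ : ℝ) :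
    xTheta h θ = (-Real.sin θ) • E3 h h h + Real.cos θ • E4 h h h h := by
  ext i
  cases i with
  | inl j => simp [xTheta, E3, E4, kron3, PiLp.add_apply, PiLp.smul_apply, smul_eq_mul]
  | inr j => simp [xTheta, E3, E4, kron4, PiLp.add_apply, PiLp.smul_apply, smul_eq_mul]

lemma Dvec_eq (h u : EuclideanSpace ℝ (Fin q)) (θ : ℝ) :
    Dvec h u θ = Real.cos θ • (E3 u h h + E3 h u h + E3 h h u)
      + Real.sin θ • (E4 u h h h + E4 h u h h + E4 h h u h + E4 h h h u) := by
  ext i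
  cases i with
  | inl j =>
    simp [Dvec, E3, E4, PiLp.add_apply, PiLp.smul_apply, smul_eq_mul]
    ring
  | inr j =>
    simp [Dvec, E3, E4, PiLp.add_apply, PiLp.smul_apply, smul_eq_mul]
    ring

lemma inner_xMap_xMap (a b : EuclideanSpace ℝ (Fin q)) (α β : ℝ) :
    ⟪xMap a α, xMap b β⟫ = Real.cos α * Real.cos β * ⟪a, b⟫ ^ 3
      + Real.sin α * Real.sin β * ⟪a, b⟫ ^ 4 := by
  rw [xMap_eq, xMap_eq]
  simp only [inner_add_left, inner_add_right, real_inner_smul_left, real_inner_smul_right,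
    inner_E3_E3, inner_E3_E4, inner_E4_E3, inner_E4_E4]
  ring

lemma inner_xMap_xTheta (a b : EuclideanSpace ℝ (Fin q)) (α β : ℝ) :
    ⟪xMap a α, xTheta b β⟫ = -(Real.cos α * Real.sin β) * ⟪a, b⟫ ^ 3
      + Real.sin α * Real.cos β * ⟪a, b⟫ ^ 4 := by
  rw [xMap_eq, xTheta_eq]
  simp only [inner_add_left, inner_add_right, real_inner_smul_left, real_inner_smul_right,
    inner_E3_E3, inner_E3_E4, inner_E4_E3, inner_E4_E4]
  ring

lemma inner_xTheta_xTheta (a b : EuclideanSpace ℝ (Fin q)) (α β : ℝ) :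
    ⟪xTheta a α, xTheta b β⟫ = Real.sin α * Real.sin β * ⟪a, b⟫ ^ 3
      + Real.cos α * Real.cos β * ⟪a, b⟫ ^ 4 := by
  rw [xTheta_eq, xTheta_eq]
  simp only [inner_add_left, inner_add_right, real_inner_smul_left, real_inner_smul_right,
    inner_E3_E3, inner_E3_E4, inner_E4_E3, inner_E4_E4]
  ring

lemma inner_xMap_Dvec (a b u : EuclideanSpace ℝ (Fin q)) (α β : ℝ) :
    ⟪xMap a α, Dvec b u β⟫ = 3 * Real.cos α * Real.cos β * ⟪a, u⟫ * ⟪a, b⟫ ^ 2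
      + 4 * Real.sin α * Real.sin β * ⟪a, u⟫ * ⟪a, b⟫ ^ 3 := by
  rw [xMap_eq, Dvec_eq]
  simp only [inner_add_left, inner_add_right, real_inner_smul_left, real_inner_smul_right,
    inner_E3_E3, inner_E3_E4, inner_E4_E3, inner_E4_E4]
  ring

lemma inner_xTheta_Dvec (a b u : EuclideanSpace ℝ (Fin q)) (α β : ℝ) :
    ⟪xTheta a α, Dvec b u β⟫ = 3 * (-Real.sin α) * Real.cos β * ⟪a, u⟫ * ⟪a, b⟫ ^ 2
      + 4 * Real.cos α * Real.sin β * ⟪a, u⟫ * ⟪a, b⟫ ^ 3 := by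
  rw [xTheta_eq, Dvec_eq]
  simp only [inner_add_left, inner_add_right, real_inner_smul_left, real_inner_smul_right,
    inner_E3_E3, inner_E3_E4, inner_E4_E3, inner_E4_E4]
  ring

lemma inner_Dvec_Dvec (h u v : EuclideanSpace ℝ (Fin q)) (θ : ℝ)
    (h1 : ⟪h, h⟫ = 1) (hu : ⟪h, u⟫ = 0) (hv : ⟪h, v⟫ = 0)
    (hu' : ⟪u, h⟫ = 0) (hv' : ⟪v, h⟫ = 0) :
    ⟪Dvec h u θ, Dvec h v θ⟫ = (3 * Real.cos θ ^ 2 + 4 * Real.sin θ ^ 2) * ⟪u, v⟫ := by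
  rw [Dvec_eq, Dvec_eq]
  simp only [inner_add_left, inner_add_right, real_inner_smul_left, real_inner_smul_right,
    inner_E3_E3, inner_E3_E4, inner_E4_E3, inner_E4_E4, h1, hu, hv, hu', hv']
  ring
end Aux

lemma inner_xTheta_xMap {q : ℕ} (a b : EuclideanSpace ℝ (Fin q)) (α β : ℝ) :
    ⟪xTheta a α, xMap b β⟫ = -(Real.sin α * Real.cos β) * ⟪a, b⟫ ^ 3
      + Real.cos α * Real.sin β * ⟪a, b⟫ ^ 4 := by
  rw [xTheta_eq, xMap_eq]
  simp only [inner_add_left, inner_add_right, real_inner_smul_left, real_inner_smul_right,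
    inner_E3_E3, inner_E3_E4, inner_E4_E3, inner_E4_E4]
  ring

lemma inner_Dvec_xMap {q : ℕ} (a b u : EuclideanSpace ℝ (Fin q)) (α β : ℝ) :
    ⟪Dvec b u β, xMap a α⟫ = 3 * Real.cos α * Real.cos β * ⟪u, a⟫ * ⟪b, a⟫ ^ 2
      + 4 * Real.sin α * Real.sin β * ⟪u, a⟫ * ⟪b, a⟫ ^ 3 := by
  rw [Dvec_eq, xMap_eq]
  simp only [inner_add_left, inner_add_right, real_inner_smul_left, real_inner_smul_right,
    inner_E3_E3, inner_E3_E4, inner_E4_E3, inner_E4_E4, real_inner_comm b a, real_inner_comm u a]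
  ring

lemma inner_Dvec_xTheta {q : ℕ} (a b u : EuclideanSpace ℝ (Fin q)) (α β : ℝ) :
    ⟪Dvec b u β, xTheta a α⟫ = 3 * (-Real.sin α) * Real.cos β * ⟪u, a⟫ * ⟪b, a⟫ ^ 2
      + 4 * Real.cos α * Real.sin β * ⟪u, a⟫ * ⟪b, a⟫ ^ 3 := by
  rw [Dvec_eq, xTheta_eq]
  simp only [inner_add_left, inner_add_right, real_inner_smul_left, real_inner_smul_right,
    inner_E3_E3, inner_E3_E4, inner_E4_E3, inner_E4_E4, real_inner_comm b a, real_inner_comm u a]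
  ring


/-- with `P` the orthogonal projection onto `L = span{x} ⊕ T_x M`,
`⟨x̃, P x̃⟩ = cos⁶ψ cos²θ̃ + cos⁸ψ sin²θ̃
  + sin²ψ (3cos²ψ cos θ̃ cos θ + 4cos³ψ sin θ̃ sin θ)²/(3cos²θ + 4sin²θ)`,
where `cos ψ = ⟨h, h̃⟩`. -/
theorem inner_projection_formula (q : ℕ) (hq : 2 ≤ q)
    (h ht : EuclideanSpace ℝ (Fin q))
    (hh : h ∈ Metric.sphere (0 : EuclideanSpace ℝ (Fin q)) 1)
    (hht : ht ∈ Metric.sphere (0 : EuclideanSpace ℝ (Fin q)) 1)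
    (θ θt : ℝ) (hθ : θ ∈ Set.Ioc (-(π / 2)) (π / 2))
    (hθt : θt ∈ Set.Ioc (-(π / 2)) (π / 2))
    (ψ : ℝ) (hψ : Real.cos ψ = ⟪h, ht⟫) :
    ⟪xMap ht θt, (Submodule.orthogonalProjectionOnto (spanL h θ) (xMap ht θt) : Rp q)⟫
      = Real.cos ψ ^ 6 * Real.cos θt ^ 2 + Real.cos ψ ^ 8 * Real.sin θt ^ 2
        + Real.sin ψ ^ 2 *
            (3 * Real.cos ψ ^ 2 * Real.cos θt * Real.cos θ
              + 4 * Real.cos ψ ^ 3 * Real.sin θt * Real.sin θ) ^ 2 /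
          (3 * Real.cos θ ^ 2 + 4 * Real.sin θ ^ 2) := by
  have hn : ‖h‖ = 1 := by simpa using mem_sphere_zero_iff_norm.mp hh
  have hnt : ‖ht‖ = 1 := by simpa using mem_sphere_zero_iff_norm.mp hht
  have h1 : ⟪h, h⟫ = 1 := by rw [real_inner_self_eq_norm_mul_norm, hn]; norm_num
  have ht1 : ⟪ht, ht⟫ = 1 := by rw [real_inner_self_eq_norm_mul_norm, hnt]; norm_num
  have hc' : ⟪h, ht⟫ = Real.cos ψ := hψ.symm
  have hc : ⟪ht, h⟫ = Real.cos ψ := by rw [real_inner_comm]; exact hc'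
  set u0 : EuclideanSpace ℝ (Fin q) := ht - Real.cos ψ • h with hu0def
  have hu0h : ⟪u0, h⟫ = 0 := by
    rw [hu0def, inner_sub_left, real_inner_smul_left, hc, h1]; ring
  have hhu0 : ⟪h, u0⟫ = 0 := by rw [real_inner_comm]; exact hu0h
  have htu0 : ⟪ht, u0⟫ = 1 - Real.cos ψ ^ 2 := by
    rw [hu0def, inner_sub_right, real_inner_smul_right, ht1, hc]; ring
  have pyth := Real.sin_sq_add_cos_sq θ
  have hK : (3 * Real.cos θ ^ 2 + 4 * Real.sin θ ^ 2) ≠ 0 := by nlinarith [sq_nonneg (Real.sin θ)]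
  set w : Rp q :=
      (Real.cos θt * Real.cos θ * Real.cos ψ ^ 3 + Real.sin θt * Real.sin θ * Real.cos ψ ^ 4)
          • xMap h θ
        + (-(Real.cos θt * Real.sin θ) * Real.cos ψ ^ 3
            + Real.sin θt * Real.cos θ * Real.cos ψ ^ 4) • xTheta h θ
        + ((3 * Real.cos ψ ^ 2 * Real.cos θt * Real.cos θ
              + 4 * Real.cos ψ ^ 3 * Real.sin θt * Real.sin θ)
            / (3 * Real.cos θ ^ 2 + 4 * Real.sin θ ^ 2)) • Dvec h u0 θ with hwdef
  have hwmem : w ∈ spanL h θ := by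
    refine Submodule.add_mem _ (Submodule.add_mem _ ?_ ?_) ?_
    · exact Submodule.smul_mem _ _
        (Submodule.subset_span (Set.mem_union_left _ (Set.mem_insert _ _)))
    · exact Submodule.smul_mem _ _
        (Submodule.subset_span (Set.mem_union_left _ (Set.mem_insert_of_mem _ rfl)))
    · exact Submodule.smul_mem _ _
        (Submodule.subset_span (Set.mem_union_right _ ⟨u0, hu0h, rfl⟩))
  have key : ∀ y ∈ spanL h θ, ⟪xMap ht θt - w, y⟫ = 0 := by
    intro y hy
    induction hy using Submodule.span_induction with
    | mem z hz =>
      rcases hz with (rfl | rfl) | ⟨u, hu, rfl⟩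
      · rw [inner_sub_left, hwdef]
        simp only [inner_add_left, real_inner_smul_left, inner_xMap_xMap, inner_xTheta_xMap,
          inner_Dvec_xMap, hc, h1, hhu0, hu0h]
        linear_combination (-(Real.cos θt * Real.cos θ * Real.cos ψ ^ 3
          + Real.sin θt * Real.sin θ * Real.cos ψ ^ 4)) * pyth
      · rw [inner_sub_left, hwdef]
        simp only [inner_add_left, real_inner_smul_left, inner_xMap_xTheta, inner_xTheta_xTheta,
          inner_Dvec_xTheta, hc, h1, hhu0, hu0h]
        linear_combination (-(-(Real.cos θt * Real.sin θ) * Real.cos ψ ^ 3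
          + Real.sin θt * Real.cos θ * Real.cos ψ ^ 4)) * pyth
      · have hu2 : ⟪h, u⟫ = 0 := by rw [real_inner_comm]; exact hu
        have hu0u : ⟪u0, u⟫ = ⟪ht, u⟫ := by
          rw [hu0def, inner_sub_left, real_inner_smul_left, hu2]; ring
        have dd := inner_Dvec_Dvec h u0 u θ h1 hhu0 hu2 hu0h hu
        rw [inner_sub_left, hwdef]
        simp only [inner_add_left, real_inner_smul_left, inner_xMap_Dvec, inner_xTheta_Dvec,
          dd, hu0u, hc, h1, hhu0, hu, hu2]
        field_simp
        ring
    | zero => exact inner_zero_right _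
    | add x y hx hy ihx ihy => rw [inner_add_right, ihx, ihy, add_zero]
    | smul r x hx ih => rw [real_inner_smul_right, ih, mul_zero]
  rw [Submodule.coe_orthogonalProjectionOnto_apply,
    Submodule.eq_starProjection_of_mem_of_inner_eq_zero hwmem key, hwdef]
  simp only [inner_add_right, real_inner_smul_right, inner_xMap_xMap, inner_xMap_xTheta,
    inner_xMap_Dvec, hc', hc, htu0]
  rw [Real.sin_sq ψ]
  linear_combination (Real.cos ψ ^ 6 * Real.cos θt ^ 2 + Real.cos ψ ^ 8 * Real.sin θt ^ 2) * pyth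


end
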